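/- For every finite multigraph G = (V, E), the classical Tutte polynomial is obtained from the edge elimination polynomial by substitution: in the field ℚ(x, y) of rational functions, T(G, x, y) = (x−1)^{−k(E)} · (y−1)^{−|V|} · ξ(G, (x−1)(y−1), y−1, 0); equivalently, (x−1)^{k(E)} (y−1)^{|V|} T(G, x, y) = ξ(G, (x−1)(y−1), y−1, 0) = Σ_{A ⊆ E} (x−1)^{k(A)} (y−1)^{|A| + k(A)}. -/

import Mathlib

/-- A finite multigraph: finite vertex and edge types, each edge assigned an
unordered pair of (not necessarily distinct) endpoints. -/
structure Multigraph where
  V : Type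
  E : Type
  [fintypeV : Fintype V]
  [decEqV : DecidableEq V]
  [fintypeE : Fintype E]
  [decEqE : DecidableEq E]
  ends : E → Sym2 V

namespace Multigraph

attribute [instance] fintypeV decEqV fintypeE decEqE

/-- The empty multigraph. -/
def emptyGraph : Multigraph where
  V := Empty
  E := Empty
  ends := fun e => e.elim

/-- The one-vertex multigraph `E₁` with no edges. -/
def singleVertex : Multigraph where
  V := Unit
  E := Empty
  ends := fun e => e.elim

/-- Disjoint union of multigraphs. -/
def disjUnion (G₁ G₂ : Multigraph) : Multigraph where
  V := G₁.V ⊕ G₂.V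
  E := G₁.E ⊕ G₂.E
  ends := Sum.elim (fun e => (G₁.ends e).map Sum.inl) (fun e => (G₂.ends e).map Sum.inr)

/-- Deletion of an edge. -/
def deleteEdge (G : Multigraph) (e : G.E) : Multigraph where
  V := G.V
  E := {e' : G.E // e' ≠ e}
  ends := fun e' => G.ends e'.val

/-- Contraction of an edge: its endpoints are identified
(replaced by a single new vertex) and the edge is removed. -/
def contractEdge (G : Multigraph) (e : G.E) : Multigraph where
  V := {v : G.V // v ∉ G.ends e} ⊕ Unit
  E := {e' : G.E // e' ≠ e}
  ends := fun e' => (G.ends e'.val).map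
    (fun v => if h : v ∈ G.ends e then Sum.inr () else Sum.inl ⟨v, h⟩)

/-- Extraction of an edge: both endpoints are deleted together with
all incident edges. -/
def extractEdge (G : Multigraph) (e : G.E) : Multigraph where
  V := {v : G.V // v ∉ G.ends e}
  E := {e' : G.E // ∀ v : G.V, v ∈ G.ends e' → v ∉ G.ends e}
  ends := fun e' => (G.ends e'.val).attachWith (fun v hv => e'.prop v hv)

/-- Deletion of a vertex (together with all incident edges). -/
def deleteVertex (G : Multigraph) (v : G.V) : Multigraph where
  V := {w : G.V // w ≠ v}
  E := {e : G.E // v ∉ G.ends e}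
  ends := fun e => (G.ends e.val).attachWith
    (fun w hw => fun hwv => e.prop (hwv ▸ hw))

/-- Number of connected components of the spanning subgraph `(V, S)`. -/
noncomputable def k (G : Multigraph) (S : Finset G.E) : ℕ :=
  Nat.card (Quot (fun u v : G.V => ∃ e ∈ S, G.ends e = s(u, v)))

/-- Number of connected components of `(V(S), S)`, the graph on the vertices
covered by `S`. -/
noncomputable def kcov (G : Multigraph) (S : Finset G.E) : ℕ :=
  Nat.card (Quot (fun u v : {w : G.V // ∃ e ∈ S, w ∈ G.ends e} =>
    ∃ e ∈ S, G.ends e = s(u.val, v.val)))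

/-- `V(A)` and `V(B)` are disjoint. -/
def CovDisjoint (G : Multigraph) (A B : Finset G.E) : Prop :=
  ∀ v : G.V, (∃ e ∈ A, v ∈ G.ends e) → ¬ (∃ e ∈ B, v ∈ G.ends e)

instance (G : Multigraph) (A B : Finset G.E) : Decidable (G.CovDisjoint A B) := by
  unfold CovDisjoint; infer_instance

/-- The edge elimination polynomial (evaluated at `x y z` in a commutative ring):
`ξ(G,x,y,z) = Σ_{(A ⊔ B) ⊆ E} x^{k(A∪B)-k_cov(B)} y^{|A|+|B|-k_cov(B)} z^{k_cov(B)}`. -/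
noncomputable def xi {R : Type*} [CommRing R] (G : Multigraph) (x y z : R) : R :=
  ∑ A : Finset G.E, ∑ B : Finset G.E,
    if G.CovDisjoint A B then
      x ^ (G.k (A ∪ B) - G.kcov B) * y ^ (A.card + B.card - G.kcov B) * z ^ G.kcov B
    else 0

/-- Isomorphism of multigraphs. -/
structure Iso (G H : Multigraph) where
  vEquiv : G.V ≃ H.V
  eEquiv : G.E ≃ H.E
  ends_map : ∀ e : G.E, H.ends (eEquiv e) = (G.ends e).map vEquiv

end Multigraph

open MvPolynomial

/-- The field `ℚ(x,y)` of rational functions in two variables. -/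
noncomputable abbrev RatFuncXY : Type := FractionRing (MvPolynomial (Fin 2) ℚ)

/-- The rational function `x`. -/
noncomputable def ratX : RatFuncXY := algebraMap (MvPolynomial (Fin 2) ℚ) RatFuncXY (X 0)

/-- The rational function `y`. -/
noncomputable def ratY : RatFuncXY := algebraMap (MvPolynomial (Fin 2) ℚ) RatFuncXY (X 1)

/-- The classical Tutte polynomial
`T(G,x,y) = Σ_{A⊆E} (x−1)^{k(A)−k(E)} (y−1)^{|A|+k(A)−|V|}`, as an element of `ℚ(x,y)`. -/
noncomputable def Multigraph.tutte (G : Multigraph) : RatFuncXY :=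
  ∑ A : Finset G.E,
    (ratX - 1) ^ ((G.k A : ℤ) - (G.k Finset.univ : ℤ))
      * (ratY - 1) ^ ((A.card : ℤ) + (G.k A : ℤ) - (Fintype.card G.V : ℤ))

open Multigraph in
/-- In `ℚ(x,y)`:
`T(G,x,y) = (x−1)^{−k(E)} (y−1)^{−|V|} · ξ(G,(x−1)(y−1), y−1, 0)`; equivalently
`(x−1)^{k(E)} (y−1)^{|V|} T(G,x,y) = ξ(G,(x−1)(y−1), y−1, 0)
  = Σ_{A⊆E} (x−1)^{k(A)} (y−1)^{|A|+k(A)}`. -/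

lemma ratX_sub_one_ne : ratX - 1 ≠ 0 := by
  have hp : (X 0 - 1 : MvPolynomial (Fin 2) ℚ) ≠ 0 := by
    intro h
    have := congrArg (MvPolynomial.eval (fun _ => (2:ℚ))) h
    norm_num at this
  intro h
  apply hp
  apply IsFractionRing.injective (MvPolynomial (Fin 2) ℚ) RatFuncXY
  rw [map_sub, map_one, map_zero]
  exact h

lemma ratY_sub_one_ne : ratY - 1 ≠ 0 := by
  have hp : (X 1 - 1 : MvPolynomial (Fin 2) ℚ) ≠ 0 := by
    intro h
    have := congrArg (MvPolynomial.eval (fun _ => (2:ℚ))) h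
    norm_num at this
  intro h
  apply hp
  apply IsFractionRing.injective (MvPolynomial (Fin 2) ℚ) RatFuncXY
  rw [map_sub, map_one, map_zero]
  exact h

lemma Multigraph.kcov_empty (G : Multigraph) : G.kcov (∅ : Finset G.E) = 0 := by
  have hE : IsEmpty {w : G.V // ∃ e ∈ (∅ : Finset G.E), w ∈ G.ends e} :=
    ⟨fun ⟨w, e, he, _⟩ => by simp at he⟩
  have : IsEmpty (Quot (fun u v : {w : G.V // ∃ e ∈ (∅ : Finset G.E), w ∈ G.ends e} =>
      ∃ e ∈ (∅ : Finset G.E), G.ends e = s(u.val, v.val))) :=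
    ⟨fun q => q.rec (fun a => hE.elim a) (fun _ _ _ => rfl)⟩
  simp only [Multigraph.kcov]
  exact Nat.card_of_isEmpty

lemma Multigraph.kcov_pos (G : Multigraph) {B : Finset G.E} (hB : B ≠ ∅) :
    0 < G.kcov B := by
  obtain ⟨e, he⟩ := Finset.nonempty_iff_ne_empty.2 hB
  obtain ⟨a, ha⟩ : ∃ a, a ∈ G.ends e := ⟨(G.ends e).out.1, Sym2.out_fst_mem _⟩
  have hne : Nonempty {w : G.V // ∃ e' ∈ B, w ∈ G.ends e'} := ⟨⟨a, e, he, ha⟩⟩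
  have hq : Nonempty (Quot (fun u v : {w : G.V // ∃ e ∈ B, w ∈ G.ends e} =>
      ∃ e ∈ B, G.ends e = s(u.val, v.val))) := ⟨Quot.mk _ hne.some⟩
  haveI : Finite (Quot (fun u v : {w : G.V // ∃ e ∈ B, w ∈ G.ends e} =>
      ∃ e ∈ B, G.ends e = s(u.val, v.val))) :=
    Finite.of_surjective _ (Quot.exists_rep)
  exact Nat.card_pos

open Multigraph in
lemma xi_zero_eq (G : Multigraph) :
    G.xi ((ratX - 1) * (ratY - 1)) (ratY - 1) 0 =
      ∑ A : Finset G.E, (ratX - 1) ^ (G.k A) * (ratY - 1) ^ (A.card + G.k A) := by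
  unfold Multigraph.xi
  refine Finset.sum_congr rfl fun A _ => ?_
  rw [Finset.sum_eq_single (∅ : Finset G.E)]
  · have hcd : G.CovDisjoint A ∅ := by
      intro v _ ⟨e, he, _⟩; simp at he
    rw [if_pos hcd]
    simp [G.kcov_empty, Finset.union_empty, mul_pow, pow_add, mul_comm, mul_assoc, mul_left_comm]
  · intro B _ hBne
    have h0 : (0 : RatFuncXY) ^ G.kcov B = 0 := zero_pow (G.kcov_pos hBne).ne'
    split <;> simp [h0]
  · intro h; simp at h

open Multigraph in
theorem tutte_eq_xi (G : Multigraph) :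
    G.tutte = (ratX - 1) ^ (-(G.k Finset.univ : ℤ)) * (ratY - 1) ^ (-(Fintype.card G.V : ℤ))
        * G.xi ((ratX - 1) * (ratY - 1)) (ratY - 1) 0
    ∧ (ratX - 1) ^ (G.k Finset.univ) * (ratY - 1) ^ (Fintype.card G.V) * G.tutte =
        G.xi ((ratX - 1) * (ratY - 1)) (ratY - 1) 0
    ∧ G.xi ((ratX - 1) * (ratY - 1)) (ratY - 1) 0 =
        ∑ A : Finset G.E, (ratX - 1) ^ (G.k A) * (ratY - 1) ^ (A.card + G.k A) := by
  have hx := ratX_sub_one_ne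
  have hy := ratY_sub_one_ne
  have h3 := xi_zero_eq G
  have h2 : (ratX - 1) ^ (G.k Finset.univ) * (ratY - 1) ^ (Fintype.card G.V) * G.tutte =
      G.xi ((ratX - 1) * (ratY - 1)) (ratY - 1) 0 := by
    rw [h3, Multigraph.tutte, Finset.mul_sum]
    refine Finset.sum_congr rfl fun A _ => ?_
    rw [← zpow_natCast (ratX - 1) (G.k Finset.univ), ← zpow_natCast (ratY - 1) (Fintype.card G.V),
      ← zpow_natCast (ratX - 1) (G.k A), ← zpow_natCast (ratY - 1) (A.card + G.k A)]
    rw [mul_mul_mul_comm, ← zpow_add₀ hx, ← zpow_add₀ hy]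
    congr 1
    · congr 1; ring
    · congr 1; push_cast; ring
  refine ⟨?_, h2, h3⟩
  have h2' : G.tutte = (ratX - 1) ^ (-(G.k Finset.univ : ℤ)) *
      (ratY - 1) ^ (-(Fintype.card G.V : ℤ))
      * ((ratX - 1) ^ (G.k Finset.univ) * (ratY - 1) ^ (Fintype.card G.V) * G.tutte) := by
    rw [← zpow_natCast (ratX - 1) (G.k Finset.univ), ← zpow_natCast (ratY - 1) (Fintype.card G.V)]
    rw [zpow_neg, zpow_neg]
    have hx' : (ratX - 1) ^ (G.k Finset.univ : ℤ) ≠ 0 := zpow_ne_zero _ hx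
    have hy' : (ratY - 1) ^ (Fintype.card G.V : ℤ) ≠ 0 := zpow_ne_zero _ hy
    field_simp
  rw [h2', h2]
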